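/- Let $k$ be a field and $\mathfrak{S}_1 = k[[u]]$. Let $\mathfrak{M}$ be a $p^n$-torsion module over $\mathfrak{S} = W(k)[[u]]$ such that each quotient $\mathfrak{M}^{i-1,i} := p^{i-1}\mathfrak{M} \cap \mathfrak{M}[p]$ is a finite free $k[[u]]$-module of rank $d$. Choose elements $\mathfrak{e}^{(i)}_1, \dots, \mathfrak{e}^{(i)}_d \in \mathfrak{M}$ such that $p^{i-1}\mathfrak{e}^{(i)}_1, \dots, p^{i-1}\mathfrak{e}^{(i)}_d$ form a $k[[u]]$-basis of $\mathfrak{M}^{i-1,i}$ for each $1 \leq i \leq n$. Then for each $1 \leq m \leq n$, the submodule $\mathfrak{M}[p^m]$ of $p^m$-torsion elements is generated over $\mathfrak{S}$ by $\{\mathfrak{e}^{(i)}_j : 1 \leq i \leq m,\ 1 \leq j \leq d\}$. In particular, $\mathfrak{M} = \mathfrak{M}[p^n]$ is generated by all the $\mathfrak{e}^{(i)}_j$. -/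
import Mathlib


/-- Lemma 5.2: if `𝔐` is killed by `p^n` and for each `1 ≤ i ≤ n` the elements
`p^(i-1) • e i j` span the submodule `𝔐^{i-1,i} = p^(i-1)𝔐 ∩ 𝔐[p]`, then for each
`1 ≤ m ≤ n` the `p^m`-torsion submodule `𝔐[p^m]` is generated by the `e i j` with
`i ≤ m`. -/
theorem stmt_5 {A M : Type*} [CommRing A] [AddCommGroup M] [Module A M]
    (p : ℕ) (hp : p.Prime) (n d : ℕ)
    (hkill : ∀ x : M, ((p : A)) ^ n • x = 0)
    (e : ℕ → Fin d → M)
    (htor : ∀ i, 1 ≤ i → i ≤ n → ∀ j, ((p : A)) ^ i • e i j = 0)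
    (hspan : ∀ i, 1 ≤ i → i ≤ n → ∀ x : M, (p : A) • x = 0 →
      (∃ y : M, x = ((p : A)) ^ (i - 1) • y) →
      x ∈ Submodule.span A (Set.range fun j => ((p : A)) ^ (i - 1) • e i j)) :
    ∀ m, 1 ≤ m → m ≤ n → ∀ x : M, ((p : A)) ^ m • x = 0 →
      x ∈ Submodule.span A {y : M | ∃ i j, 1 ≤ i ∧ i ≤ m ∧ y = e i j} := by
  intro m
  induction m with
  | zero => omega
  | succ m ih =>
    intro _ hmn x hx
    -- p^m • x is p-torsion and of the form p^((m+1)-1) • y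
    have hp1 : (p : A) • ((p : A) ^ m • x) = 0 := by
      rw [smul_smul, ← pow_succ', hx]
    have hmem := hspan (m + 1) (by omega) hmn ((p : A) ^ m • x) hp1
      ⟨x, by simp⟩
    simp only [Nat.add_sub_cancel] at hmem
    rw [Submodule.mem_span_range_iff_exists_fun] at hmem
    obtain ⟨c, hc⟩ := hmem
    have key : x = (x - ∑ j, c j • e (m + 1) j) + ∑ j, c j • e (m + 1) j := by
      abel
    rw [key]
    refine add_mem ?_ ?_
    · rcases Nat.eq_zero_or_pos m with hm0 | hm1
      ·
        subst hm0
        have : x - ∑ j, c j • e 1 j = 0 := by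
          have := hc
          simp only [pow_zero, one_smul] at this
          rw [sub_eq_zero]
          exact this.symm
        rw [this]
        exact zero_mem _
      · have hx' : (p : A) ^ m • (x - ∑ j, c j • e (m + 1) j) = 0 := by
          rw [smul_sub, Finset.smul_sum]
          have : ∑ j, (p : A) ^ m • (c j • e (m + 1) j)
              = ∑ j, c j • ((p : A) ^ m • e (m + 1) j) := by
            refine Finset.sum_congr rfl fun j _ => ?_
            rw [smul_comm]
          rw [this, hc, sub_self]
        have := ih hm1 (by omega) _ hx'
        refine Submodule.span_mono ?_ this
        rintro y ⟨i, j, hi1, him, rfl⟩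
        exact ⟨i, j, hi1, by omega, rfl⟩
    · refine sum_mem fun j _ => Submodule.smul_mem _ _ ?_
      exact Submodule.subset_span ⟨m + 1, j, by omega, le_refl _, rfl⟩
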